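/- Every commutative cancellative monoid with the IDF property (every element has only finitely many irreducible divisors up to associates) is a U-FFM, i.e., every atomic element has only finitely many factorizations. -/

import Mathlib

/-- The set of factorizations of `a`: multisets of atoms (irreducible elements), counted up
to associates, whose product is associated to `a`. -/
def FactorizationsOf {α : Type*} [CommMonoid α] (a : α) : Set (Multiset (Associates α)) :=
  {s | (∀ p ∈ s, Irreducible p) ∧ s.prod = Associates.mk a}

/-- An element is atomic if it is a unit or a finite product of atoms; equivalently, some
finite multiset of atoms has product associated to it. -/
def IsAtomicElem {α : Type*} [CommMonoid α] (a : α) : Prop :=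
  ∃ s : Multiset α, (∀ p ∈ s, Irreducible p) ∧ Associated s.prod a

/-- A monoid has the IDF property if every element is divisible by only finitely many
atoms up to associates. -/
def IsIDFMonoid (α : Type*) [CommMonoid α] : Prop :=
  ∀ a : α, {p : Associates α | Irreducible p ∧ p ∣ Associates.mk a}.Finite

private theorem assoc_cancel {M : Type*} [CancelCommMonoid M]
    (x y z : Associates M) (hxy : x * y = x * z) : y = z := by
  obtain ⟨x', rfl⟩ := Associates.mk_surjective x
  obtain ⟨y', rfl⟩ := Associates.mk_surjective y
  obtain ⟨z', rfl⟩ := Associates.mk_surjective z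
  rw [Associates.mk_mul_mk, Associates.mk_mul_mk, Associates.mk_eq_mk_iff_associated] at hxy
  obtain ⟨u, hu⟩ := hxy
  rw [Associates.mk_eq_mk_iff_associated]
  exact ⟨u, mul_left_cancel (by rw [← mul_assoc]; exact hu)⟩

/-- Every commutative cancellative monoid with the IDF property is a U-FFM:
every atomic element has only finitely many factorizations. -/
theorem idf_is_uffm (M : Type*) [CancelCommMonoid M] (h : IsIDFMonoid M) :
    ∀ a : M, IsAtomicElem a → (FactorizationsOf a).Finite := by
  classical
  intro a _ha
  set F : Finset (Associates M) := (h a).toFinset with hF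
  -- every atom appearing in a factorization lies in F
  have hmem : ∀ s ∈ FactorizationsOf a, ∀ p ∈ s, p ∈ F := by
    rintro s ⟨hirr, hprod⟩ p hp
    rw [hF, Set.Finite.mem_toFinset]
    exact ⟨hirr p hp, hprod ▸ Multiset.dvd_prod hp⟩
  -- the set of factorizations is an antichain under ≤
  have hanti : IsAntichain (· ≤ ·) (FactorizationsOf a) := by
    rintro s hs t ht hne hle
    have hst : s + (t - s) = t := add_tsub_cancel_of_le hle
    have hr0 : t - s ≠ 0 := by
      intro h0
      apply hne
      rw [← hst, h0, add_zero]
    obtain ⟨p, hp⟩ := Multiset.exists_mem_of_ne_zero hr0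
    have hpt : p ∈ t := Multiset.mem_of_le (Multiset.sub_le_self t s) hp
    have hpirr : Irreducible p := ht.1 p hpt
    have hprod : s.prod * (t - s).prod = s.prod * 1 := by
      rw [mul_one, ← Multiset.prod_add, hst, ht.2, hs.2]
    have h1 : (t - s).prod = 1 := assoc_cancel _ _ _ hprod
    exact hpirr.not_isUnit (isUnit_of_dvd_one (h1 ▸ Multiset.dvd_prod hp))
  -- embed into F → ℕ via counts
  set f : Multiset (Associates M) → (F →₀ ℕ) :=
    fun s => Finsupp.equivFunOnFinite.symm (fun p => s.count p.1) with hf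
  have hfapp : ∀ s p, f s p = s.count p.1 := fun s p => rfl
  have hreflect : ∀ s ∈ FactorizationsOf a, ∀ t ∈ FactorizationsOf a,
      f s ≤ f t → s ≤ t := by
    intro s hs t ht hle
    rw [Multiset.le_iff_count]
    intro p
    by_cases hpF : p ∈ F
    · have := Finsupp.le_def.1 hle ⟨p, hpF⟩
      rwa [hfapp, hfapp] at this
    · have : s.count p = 0 := Multiset.count_eq_zero.2 fun hps => hpF (hmem s hs p hps)
      simp [this]
  have hinj : Set.InjOn f (FactorizationsOf a) := by
    intro s hs t ht hst
    ext p
    by_cases hpF : p ∈ F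
    · have := Finsupp.ext_iff.1 hst ⟨p, hpF⟩
      rwa [hfapp, hfapp] at this
    · rw [Multiset.count_eq_zero.2 fun hps => hpF (hmem s hs p hps),
        Multiset.count_eq_zero.2 fun hpt => hpF (hmem t ht p hpt)]
  have himg : IsAntichain (· ≤ ·) (f '' FactorizationsOf a) := by
    rintro _ ⟨s, hs, rfl⟩ _ ⟨t, ht, rfl⟩ hne hle
    exact hanti hs ht (fun e => hne (e ▸ rfl)) (hreflect s hs t ht hle)
  have hpwo : Set.IsPWO (f '' FactorizationsOf a) :=
    Set.isPWO_of_wellQuasiOrderedLE (f '' FactorizationsOf a)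
  have hfin : (f '' FactorizationsOf a).Finite :=
    himg.finite_of_partiallyWellOrderedOn hpwo
  exact Set.Finite.of_finite_image hfin hinj
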